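/- Let d ≥ 2 be EVEN, let c₁, …, c_d ≥ 0 with c = c₁ + ⋯ + c_d, let C be the d×d matrix all of whose rows equal (c₁, …, c_d), and assume M_C = (1−c)·1 + C is a Markov matrix. Then M_C is embeddable (i.e., M_C = exp(Q) for SOME d×d Markov generator Q, not necessarily of equal-input type) if and only if 0 ≤ c < 1. -/

import Mathlib

open NormedSpace
open scoped Matrix

/-- A Markov generator (rate matrix): nonnegative off-diagonal entries,
each row sums to 0. -/
def IsGenerator {d : ℕ} (Q : Matrix (Fin d) (Fin d) ℝ) : Prop :=
  (∀ i j, i ≠ j → 0 ≤ Q i j) ∧ ∀ i, ∑ j, Q i j = 0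

/-- If `A * A = μ • A` with `μ ≠ 0`, then `exp A = 1 + ((e^μ - 1)/μ) • A`. -/
lemma exp_of_sq {d : ℕ} (A : Matrix (Fin d) (Fin d) ℝ) (μ : ℝ) (hμ : μ ≠ 0)
    (h : A * A = μ • A) :
    NormedSpace.exp A = 1 + ((Real.exp μ - 1) / μ) • A := by
  letI : SeminormedRing (Matrix (Fin d) (Fin d) ℝ) := Matrix.linftyOpSemiNormedRing
  letI : NormedRing (Matrix (Fin d) (Fin d) ℝ) := Matrix.linftyOpNormedRing
  letI : NormedAlgebra ℝ (Matrix (Fin d) (Fin d) ℝ) := Matrix.linftyOpNormedAlgebra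
  have hpow : ∀ n : ℕ, A ^ (n + 1) = μ ^ n • A := by
    intro n
    induction n with
    | zero => simp
    | succ n ih =>
      rw [pow_succ, ih, Matrix.smul_mul, h, smul_smul, ← pow_succ]
  have hsum : Summable fun n : ℕ => ((Nat.factorial n : ℝ))⁻¹ • A ^ n :=
    NormedSpace.expSeries_summable' (𝕂 := ℝ) A
  have hg : Summable fun n : ℕ => ((Nat.factorial (n + 1) : ℝ))⁻¹ * μ ^ n := by
    apply Summable.of_norm_bounded (Real.summable_pow_div_factorial |μ|)
    intro n
    have he : ‖((Nat.factorial (n + 1) : ℝ))⁻¹ * μ ^ n‖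
        = |μ| ^ n / (Nat.factorial (n + 1) : ℝ) := by
      rw [Real.norm_eq_abs, abs_mul, abs_pow, abs_inv, Nat.abs_cast]; ring
    rw [he]
    gcongr
    · exact Nat.le_succ n
  have key : NormedSpace.exp A =
      1 + (∑' n : ℕ, ((Nat.factorial (n + 1) : ℝ))⁻¹ * μ ^ n) • A := by
    rw [NormedSpace.exp_eq_tsum ℝ]
    dsimp only
    rw [Summable.tsum_eq_zero_add hsum]
    congr 1
    · simp
    · rw [← Summable.tsum_smul_const hg]
      congr 1
      ext n
      rw [hpow n, smul_smul]
  have hS : (∑' n : ℕ, ((Nat.factorial (n + 1) : ℝ))⁻¹ * μ ^ n) = (Real.exp μ - 1) / μ := by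
    have hexp : Real.exp μ = ∑' n : ℕ, ((Nat.factorial n : ℝ))⁻¹ * μ ^ n := by
      rw [Real.exp_eq_exp_ℝ, NormedSpace.exp_eq_tsum ℝ]
      simp [smul_eq_mul]
    have hsum2 : Summable fun n : ℕ => ((Nat.factorial n : ℝ))⁻¹ * μ ^ n := by
      apply Summable.of_norm_bounded (Real.summable_pow_div_factorial |μ|)
      intro n
      have he : ‖((Nat.factorial n : ℝ))⁻¹ * μ ^ n‖
          = |μ| ^ n / (Nat.factorial n : ℝ) := by
        rw [Real.norm_eq_abs, abs_mul, abs_pow, abs_inv, Nat.abs_cast]; ring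
      rw [he]
    have h2 : μ * (∑' n : ℕ, ((Nat.factorial (n + 1) : ℝ))⁻¹ * μ ^ n) = Real.exp μ - 1 := by
      have hstep : (fun x : ℕ => μ * ((Nat.factorial (x + 1) : ℝ)⁻¹ * μ ^ x))
          = fun x : ℕ => (Nat.factorial (x + 1) : ℝ)⁻¹ * μ ^ (x + 1) := by
        funext x; rw [pow_succ]; ring
      rw [← tsum_mul_left, hstep, hexp, Summable.tsum_eq_zero_add hsum2]
      simp
    rw [eq_div_iff hμ]
    linear_combination h2
  rw [key, hS]

theorem equal_input_embeddable_iff_even (d : ℕ) (hd : 2 ≤ d) (heven : Even d)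
    (c : Fin d → ℝ) (hc : ∀ i, 0 ≤ c i)
    (hMarkov : ∀ i, (∑ j, c j) ≤ 1 + c i)
    (M : Matrix (Fin d) (Fin d) ℝ)
    (hM : M = (1 - ∑ j, c j) • (1 : Matrix (Fin d) (Fin d) ℝ) +
      Matrix.of fun _ j => c j) :
    (∃ Q : Matrix (Fin d) (Fin d) ℝ, IsGenerator Q ∧ NormedSpace.exp Q = M) ↔
    (0 ≤ ∑ j, c j ∧ ∑ j, c j < 1) := by
  set s : ℝ := ∑ j, c j with hs
  have hs0 : 0 ≤ s := Finset.sum_nonneg fun i _ => hc i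
  constructor
  · rintro ⟨Q, hQ, hQexp⟩
    refine ⟨hs0, ?_⟩
    -- det M > 0
    have hdet : 0 < M.det := by
      have h2 : Q = (2⁻¹ : ℝ) • Q + (2⁻¹ : ℝ) • Q := by
        rw [← add_smul]; norm_num
      have hcomm : Commute ((2⁻¹ : ℝ) • Q) ((2⁻¹ : ℝ) • Q) := Commute.refl _
      have : NormedSpace.exp Q =
          NormedSpace.exp ((2⁻¹ : ℝ) • Q) * NormedSpace.exp ((2⁻¹ : ℝ) • Q) := by
        conv_lhs => rw [h2]
        exact Matrix.exp_add_of_commute _ _ hcomm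
      have hunit : IsUnit (NormedSpace.exp ((2⁻¹ : ℝ) • Q)).det :=
        (Matrix.isUnit_iff_isUnit_det _).mp (Matrix.isUnit_exp _)
      have hne : (NormedSpace.exp ((2⁻¹ : ℝ) • Q)).det ≠ 0 :=
        hunit.ne_zero
      rw [← hQexp, this, Matrix.det_mul]
      exact mul_self_pos.mpr hne
    by_contra hlt
    push_neg at hlt
    rcases eq_or_lt_of_le hlt with heq | hgt
    · -- s = 1 : M has equal rows, det = 0
      have hM0 : M.det = 0 := by
        apply Matrix.det_zero_of_row_eq (i := ⟨0, by omega⟩) (j := ⟨1, by omega⟩)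
        · simp [Fin.ext_iff]
        · funext j
          simp [hM, ← heq, Matrix.one_apply, Fin.ext_iff]
      rw [hM0] at hdet; exact lt_irrefl _ hdet
    · -- s > 1 : det M = (1-s)^(d-1) < 0
      have h1s : (1 : ℝ) - s ≠ 0 := by linarith
      have hMfact : M = (1 - s) • ((1 : Matrix (Fin d) (Fin d) ℝ) +
          Matrix.replicateCol (Fin 1) (fun _ => (1 - s)⁻¹) * Matrix.replicateRow (Fin 1) c) := by
        rw [hM]
        ext i j
        simp only [Matrix.smul_apply, Matrix.add_apply, Matrix.one_apply, Matrix.of_apply,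
          Matrix.mul_apply, Matrix.replicateCol_apply, Matrix.replicateRow_apply, Finset.sum_const,
          Finset.card_univ, Fintype.card_fin, one_smul, smul_eq_mul]
        by_cases hij : i = j <;> simp [hij] <;> field_simp
      have hdetM : M.det = (1 - s) ^ (d - 1) := by
        rw [hMfact, Matrix.det_smul]
        erw [Matrix.det_one_add_replicateCol_mul_replicateRow (ι := Fin 1)]
        have : c ⬝ᵥ (fun _ => (1 - s)⁻¹) = s * (1 - s)⁻¹ := by
          simp [dotProduct, ← Finset.sum_mul, ← hs]
        rw [this, Fintype.card_fin]
        have hd1 : d = (d - 1) + 1 := by omega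
        rw [hd1, pow_succ]
        field_simp
        rw [Nat.add_sub_cancel, sub_add_cancel, mul_one]
      have hodd : Odd (d - 1) := by
        rcases heven with ⟨k, hk⟩
        exact ⟨k - 1, by omega⟩
      have : M.det < 0 := by
        rw [hdetM]
        exact Odd.pow_neg hodd (by linarith)
      linarith
  · rintro ⟨-, hs1⟩
    rcases eq_or_lt_of_le hs0 with heq | hpos
    · -- s = 0 : all c i = 0, M = 1, Q = 0
      have hcall : ∀ i, c i = 0 := by
        intro i
        have := (Finset.sum_eq_zero_iff_of_nonneg (fun j _ => hc j)).mp heq.symm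
        exact this i (Finset.mem_univ i)
      refine ⟨0, ⟨fun i j _ => le_refl _, fun i => by simp⟩, ?_⟩
      rw [NormedSpace.exp_zero, hM, ← heq]
      ext i j
      simp [hcall, Matrix.one_apply]
    · -- 0 < s < 1
      set t : ℝ := -Real.log (1 - s) / s with ht
      have hlog : Real.log (1 - s) < 0 :=
        Real.log_neg (by linarith) (by linarith)
      have htpos : 0 < t := by
        apply div_pos (by linarith) hpos
      set N : Matrix (Fin d) (Fin d) ℝ :=
        Matrix.of (fun _ j => c j) - s • (1 : Matrix (Fin d) (Fin d) ℝ) with hN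
      refine ⟨t • N, ?_, ?_⟩
      · constructor
        · intro i j hij
          have : (t • N) i j = t * c j := by
            simp [hN, Matrix.one_apply, hij]
          rw [this]
          exact mul_nonneg htpos.le (hc j)
        · intro i
          have h1 : ∑ j, (1 : Matrix (Fin d) (Fin d) ℝ) i j = 1 := by
            simp [Matrix.one_apply]
          have hrow : ∑ j, N i j = 0 := by
            simp only [hN, Matrix.sub_apply, Matrix.smul_apply, Matrix.of_apply,
              smul_eq_mul, Finset.sum_sub_distrib, ← Finset.mul_sum, h1, mul_one]
            rw [← hs]
            ring
          simp only [Matrix.smul_apply, smul_eq_mul, ← Finset.mul_sum, hrow, mul_zero]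
      · -- exp (t • N) = M
        have hCC : (Matrix.of (fun _ j => c j) : Matrix (Fin d) (Fin d) ℝ) *
            Matrix.of (fun _ j => c j) = s • Matrix.of (fun _ j => c j) := by
          ext i j
          simp [Matrix.mul_apply, ← Finset.sum_mul, ← hs]
        have hNN : N * N = (-s) • N := by
          rw [hN]
          rw [sub_mul, mul_sub, mul_sub, hCC]
          simp only [Matrix.smul_mul, Matrix.mul_smul, Matrix.one_mul, Matrix.mul_one,
            smul_smul, Matrix.smul_one_eq_diagonal]
          rw [smul_sub]
          ext i j
          simp [Matrix.one_apply]
          by_cases hij : i = j <;> simp [hij] <;> ring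
        have hQQ : (t • N) * (t • N) = (-(t * s)) • (t • N) := by
          rw [Matrix.smul_mul, Matrix.mul_smul, hNN, smul_smul, smul_smul, smul_smul]
          congr 1
          ring
        have hμ : -(t * s) ≠ 0 := by
          have : 0 < t * s := mul_pos htpos hpos
          linarith
        rw [exp_of_sq _ _ hμ hQQ]
        have hts : t * s = -Real.log (1 - s) := by
          rw [ht]; field_simp
        have hexp : Real.exp (-(t * s)) = 1 - s := by
          rw [hts, neg_neg, Real.exp_log (by linarith)]
        rw [hexp]
        have hcoef : ((1 - s - 1) / -(t * s)) * t = 1 := by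
          rw [show (1:ℝ) - s - 1 = -s by ring, hts, neg_neg, ht]
          field_simp
          exact div_self hlog.ne
        rw [smul_smul, hcoef, one_smul, hM, hN, sub_smul, one_smul]
        abel
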